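/- Let f be slice-regular on an axially symmetric domain Ω of a hypercomplex subspace M (associative case) with ∂̄_B f = 0. Then f is locally constant. Similarly, if f is anti-slice-regular (∂f/∂x = 0) and ∂_B f = 0, then f is locally constant. -/

import Mathlib

noncomputable section
namespace PaperStmt

variable {A : Type*} [NormedRing A] [NormedAlgebra ℝ A] {m : ℕ}

/-- Partial derivative in the `i`-th coordinate direction. -/
def pd (i : Fin (m + 1)) (f : (Fin (m + 1) → ℝ) → A) : (Fin (m + 1) → ℝ) → A :=
  fun x => fderiv ℝ f x (Pi.single i 1)

/-- The Cauchy–Riemann operator `∂̄_B = (1/2)(∂₀ + ∑ᵢ vᵢ ∂ᵢ)` induced by the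
basis `B = (1, v₁, …, v_m)` (so `v 0 = 1`). -/
def dbar (v : Fin (m + 1) → A) (f : (Fin (m + 1) → ℝ) → A) : (Fin (m + 1) → ℝ) → A :=
  fun x => (2 : ℝ)⁻¹ •
    (pd 0 f x + ∑ i ∈ Finset.univ.erase (0 : Fin (m + 1)), v i * pd i f x)

/-- The conjugated Cauchy–Riemann operator `∂_B = (1/2)(∂₀ - ∑ᵢ vᵢ ∂ᵢ)`. -/
def dconj (v : Fin (m + 1) → A) (f : (Fin (m + 1) → ℝ) → A) : (Fin (m + 1) → ℝ) → A :=
  fun x => (2 : ℝ)⁻¹ •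
    (pd 0 f x - ∑ i ∈ Finset.univ.erase (0 : Fin (m + 1)), v i * pd i f x)

/-- The Laplacian `Δ_B = ∑ᵢ ∂ᵢ²` of `M ≅ ℝ^{m+1}`. -/
def lap (f : (Fin (m + 1) → ℝ) → A) : (Fin (m + 1) → ℝ) → A :=
  fun x => ∑ i : Fin (m + 1), pd i (pd i f) x

/-- The norm `β = ‖Im x‖` of the imaginary part of the point with
coordinates `x`. -/
def nIm (x : Fin (m + 1) → ℝ) : ℝ :=
  Real.sqrt (∑ i ∈ Finset.univ.erase (0 : Fin (m + 1)), (x i) ^ 2)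

/-- The point `α + iβ` of the complex half-plane corresponding to `x`. -/
def zeta (x : Fin (m + 1) → ℝ) : ℂ := ⟨x 0, nIm x⟩

/-- The imaginary part `Im(x) = ∑_{i=1}^m xᵢ vᵢ` of the point of `M` with
coordinates `x`. -/
def imv (v : Fin (m + 1) → A) (x : Fin (m + 1) → ℝ) : A :=
  ∑ i ∈ Finset.univ.erase (0 : Fin (m + 1)), x i • v i

/-- The point of `M` with coordinates `x` w.r.t. the basis `(1, v₁, …, v_m)`. -/
def iot (v : Fin (m + 1) → A) (x : Fin (m + 1) → ℝ) : A :=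
  ∑ i : Fin (m + 1), x i • v i

/-- The slice function `I(F₁ + √-1 F₂)` induced on (the coordinates of) `M` by
the stem function with components `F₁, F₂`:
`f(α + Jβ) = F₁(α+iβ) + J F₂(α+iβ)` with `β = ‖Im x‖ ≥ 0`, `J = Im(x)/β`. -/
def sfun (v : Fin (m + 1) → A) (F₁ F₂ : ℂ → A) : (Fin (m + 1) → ℝ) → A :=
  fun x => F₁ (zeta x) + imv v x * ((nIm x)⁻¹ • F₂ (zeta x))

/-- The spherical derivative `f'ₛ(x) = β⁻¹ F₂(α+iβ)` of the slice function
induced by the stem components `(F₁, F₂)`. -/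
def sder (F₂ : ℂ → A) : (Fin (m + 1) → ℝ) → A :=
  fun x => (nIm x)⁻¹ • F₂ (zeta x)

/-- Real partial derivative of a stem component along `1 ∈ ℂ`. -/
def d1 (F : ℂ → A) (z : ℂ) : A := fderiv ℝ F z 1

/-- Real partial derivative of a stem component along `i ∈ ℂ`. -/
def dI (F : ℂ → A) (z : ℂ) : A := fderiv ℝ F z Complex.I

/-- The tangential operator `L_{ij} = xᵢ ∂ⱼ - xⱼ ∂ᵢ`. -/
def Lop (i j : Fin (m + 1)) (f : (Fin (m + 1) → ℝ) → A) : (Fin (m + 1) → ℝ) → A :=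
  fun x => x i • pd j f x - x j • pd i f x

/-- The spherical Dirac operator `Γ_B = -(1/2) ∑_{i,j=1}^m vᵢ (vⱼ L_{ij})`. -/
def Gam (v : Fin (m + 1) → A) (f : (Fin (m + 1) → ℝ) → A) : (Fin (m + 1) → ℝ) → A :=
  fun x => -((2 : ℝ)⁻¹ •
    ∑ i ∈ Finset.univ.erase (0 : Fin (m + 1)),
      ∑ j ∈ Finset.univ.erase (0 : Fin (m + 1)), v i * (v j * Lop i j f x))

-- ## Auxiliary lemmas

lemma continuous_nIm : Continuous (nIm (m := m)) :=
  Real.continuous_sqrt.comp (continuous_finset_sum _ fun i _ => (continuous_apply i).pow 2)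

lemma continuous_zeta : Continuous (zeta (m := m)) := by
  have h : (zeta (m := m)) = fun y => ((y 0 : ℝ) : ℂ) + nIm y • Complex.I := by
    funext y; apply Complex.ext <;> simp [zeta, Complex.real_smul]
  rw [h]
  exact (Complex.continuous_ofReal.comp (continuous_apply 0)).add
    (continuous_nIm.smul continuous_const)

lemma key (hm : 2 ≤ m) (v : Fin (m + 1) → A)
    (hsq : ∀ i : Fin (m + 1), i ≠ 0 → v i * v i = -1)
    (D : Set ℂ) (hD : IsOpen D) (F₁ F₂ : ℂ → A)
    (hF1 : ContDiffOn ℝ 1 F₁ D) (hF2 : ContDiffOn ℝ 1 F₂ D)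
    (s : ℝ) (hs : s = 1 ∨ s = -1)
    (hCR : ∀ z ∈ D, d1 F₁ z = s • dI F₂ z ∧ dI F₁ z = -(s • d1 F₂ z))
    (hker : ∀ x : Fin (m + 1) → ℝ, zeta x ∈ D → nIm x ≠ 0 →
      pd 0 (sfun v F₁ F₂) x
        + s • ∑ i ∈ Finset.univ.erase (0 : Fin (m + 1)), v i * pd i (sfun v F₁ F₂) x = 0)
    (z : ℂ) (hz : z ∈ D) (him : 0 < z.im) : F₂ z = 0 := by
  classical
  set S : Finset (Fin (m + 1)) := Finset.univ.erase 0 with hS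
  have h01 : (0 : Fin (m + 1)) ≠ 1 := by
    intro h
    have := congrArg Fin.val h
    simp [Fin.val_one'] at this
    omega
  have h10 : (1 : Fin (m + 1)) ≠ 0 := h01.symm
  have h1S : (1 : Fin (m + 1)) ∈ S := Finset.mem_erase.mpr ⟨h10, Finset.mem_univ _⟩
  set x : Fin (m + 1) → ℝ := fun i => if i = 0 then z.re else if i = 1 then z.im else 0 with hxdef
  have hx0 : x 0 = z.re := by simp [hxdef]
  have hx1 : x 1 = z.im := by simp [hxdef, h10]
  have hxi : ∀ i : Fin (m + 1), i ≠ 0 → i ≠ 1 → x i = 0 := by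
    intro i hi0 hi1; simp [hxdef, hi0, hi1]
  have hbne : z.im ≠ 0 := ne_of_gt him
  have hsum : ∑ i ∈ S, x i ^ 2 = z.im ^ 2 := by
    rw [Finset.sum_eq_single_of_mem 1 h1S]
    · rw [hx1]
    · intro i hiS hne
      rw [hxi i (Finset.mem_erase.mp hiS).1 hne]
      simp
  have hnx : nIm x = z.im := by
    rw [nIm, ← hS, hsum, Real.sqrt_sq him.le]
  have hzx : zeta x = z := by
    apply Complex.ext
    · simpa [zeta] using hx0
    · simpa [zeta] using hnx
  -- projections
  set P : (i : Fin (m + 1)) → ((Fin (m + 1) → ℝ) →L[ℝ] ℝ) :=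
    fun i => ContinuousLinearMap.proj i with hP
  -- derivative of the sum of squares
  set Lq : (Fin (m + 1) → ℝ) →L[ℝ] ℝ := ∑ i ∈ S, (2 * x i) • P i with hLq
  have hq : HasFDerivAt (fun y : Fin (m + 1) → ℝ => ∑ i ∈ S, y i ^ 2) Lq x := by
    refine HasFDerivAt.fun_sum fun i _ => ?_
    have h := ((P i).hasFDerivAt (x := x)).mul' ((P i).hasFDerivAt (x := x))
    have hfun : (fun y : Fin (m + 1) → ℝ => y i ^ 2) = fun y => (P i) y * (P i) y := by
      funext y; simp [hP]; ring
    rw [hfun]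
    refine (h.congr_fderiv ?_ : HasFDerivAt (fun y => (P i) y * (P i) y) _ x)
    ext1 w
    simp [hP]
    ring
  -- derivative of nIm
  set Ln : (Fin (m + 1) → ℝ) →L[ℝ] ℝ := (1 / (2 * z.im)) • Lq with hLn
  have hn : HasFDerivAt (nIm (m := m)) Ln x := by
    have hq0 : (∑ i ∈ S, x i ^ 2) ≠ 0 := by rw [hsum]; positivity
    have h := (Real.hasDerivAt_sqrt hq0).comp_hasFDerivAt x hq
    have : Real.sqrt (∑ i ∈ S, x i ^ 2) = z.im := by rw [hsum, Real.sqrt_sq him.le]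
    rw [this] at h
    exact h
  -- derivative of zeta
  set Lz : (Fin (m + 1) → ℝ) →L[ℝ] ℂ :=
    Complex.ofRealCLM.comp (P 0) + Ln.smulRight Complex.I with hLzdef
  have hzeta : HasFDerivAt (zeta (m := m)) Lz x := by
    have hfun : (zeta (m := m)) = fun y => ((y 0 : ℝ) : ℂ) + nIm y • Complex.I := by
      funext y; apply Complex.ext <;> simp [zeta, Complex.real_smul]
    rw [hfun]
    exact (Complex.ofRealCLM.hasFDerivAt.comp x ((P 0).hasFDerivAt)).add
      (hn.smul_const Complex.I)
  -- derivatives of F₁, F₂ at z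
  have hdF1 : HasFDerivAt F₁ (fderiv ℝ F₁ z) z :=
    ((hF1.differentiableOn one_ne_zero).differentiableAt (hD.mem_nhds hz)).hasFDerivAt
  have hdF2 : HasFDerivAt F₂ (fderiv ℝ F₂ z) z :=
    ((hF2.differentiableOn one_ne_zero).differentiableAt (hD.mem_nhds hz)).hasFDerivAt
  have hc1 : HasFDerivAt (fun y => F₁ (zeta y)) ((fderiv ℝ F₁ z).comp Lz) x := by
    exact HasFDerivAt.comp (f := zeta) x (by rw [hzx]; exact hdF1) hzeta
  have hc2 : HasFDerivAt (fun y => F₂ (zeta y)) ((fderiv ℝ F₂ z).comp Lz) x := by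
    exact HasFDerivAt.comp (f := zeta) x (by rw [hzx]; exact hdF2) hzeta
  -- derivative of (nIm ·)⁻¹
  have hninv : HasFDerivAt (fun y => (nIm y)⁻¹) ((-(z.im ^ 2)⁻¹) • Ln) x := by
    have h := (hasDerivAt_inv (by rw [hnx]; exact hbne)).comp_hasFDerivAt x hn
    rw [hnx] at h
    exact h
  -- derivative of the spherical-derivative factor
  set Lg : (Fin (m + 1) → ℝ) →L[ℝ] A :=
    (nIm x)⁻¹ • ((fderiv ℝ F₂ z).comp Lz)
      + ((-(z.im ^ 2)⁻¹) • Ln).smulRight (F₂ (zeta x)) with hLgdef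
  have hg : HasFDerivAt (fun y => (nIm y)⁻¹ • F₂ (zeta y)) Lg x := hninv.smul hc2
  -- derivative of imv
  set Li : (Fin (m + 1) → ℝ) →L[ℝ] A := ∑ i ∈ S, (P i).smulRight (v i) with hLidef
  have himv : HasFDerivAt (imv v) Li x := by
    refine HasFDerivAt.fun_sum fun i _ => ?_
    exact ((P i).hasFDerivAt (x := x)).smul_const (v i)
  -- total derivative of sfun
  set Lt : (Fin (m + 1) → ℝ) →L[ℝ] A :=
    (fderiv ℝ F₁ z).comp Lz
      + (imv v x • Lg + Li.smulRight ((nIm x)⁻¹ • F₂ (zeta x))) with hLt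
  have hf : HasFDerivAt (sfun v F₁ F₂) Lt x := hc1.add (himv.mul' hg)
  have hpd : ∀ j, pd j (sfun v F₁ F₂) x = Lt (Pi.single j 1) := by
    intro j; rw [pd, hf.fderiv]
  -- evaluations of the pieces
  have hLqv : ∀ j : Fin (m + 1), Lq (Pi.single j 1) = if j ∈ S then 2 * x j else 0 := by
    intro j
    rw [hLq]
    simp only [ContinuousLinearMap.sum_apply, ContinuousLinearMap.smul_apply, hP,
      ContinuousLinearMap.proj_apply, Pi.single_apply, smul_eq_mul, mul_ite, mul_one, mul_zero]
    rw [Finset.sum_ite_eq' S j (fun i => 2 * x i)]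
  have hLnv : ∀ j : Fin (m + 1), Ln (Pi.single j 1) = if j = 1 then 1 else 0 := by
    intro j
    rw [hLn]
    by_cases hj1 : j = 1
    · subst hj1
      simp only [ContinuousLinearMap.smul_apply, hLqv, h1S, if_pos, hx1, smul_eq_mul, if_true]
      field_simp
    · by_cases hj0 : j = 0
      · subst hj0
        have : (0 : Fin (m + 1)) ∉ S := by simp [hS]
        simp [hLqv, this, hj1]
      · have hjS : j ∈ S := Finset.mem_erase.mpr ⟨hj0, Finset.mem_univ _⟩
        simp [hLqv, hjS, hj1, hxi j hj0 hj1]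
  have hLzv0 : Lz (Pi.single 0 1) = 1 := by
    simp [hLzdef, hP, hLnv, h01]
  have hLzv1 : Lz (Pi.single 1 1) = Complex.I := by
    simp [hLzdef, hP, hLnv, Pi.single_apply, h01]
  have hLzvi : ∀ j : Fin (m + 1), j ≠ 0 → j ≠ 1 → Lz (Pi.single j 1) = 0 := by
    intro j hj0 hj1
    simp [hLzdef, hP, hLnv, Pi.single_apply, hj0, hj1]
  have hLiv : ∀ j : Fin (m + 1), Li (Pi.single j 1) = if j ∈ S then v j else 0 := by
    intro j
    rw [hLidef]
    simp only [ContinuousLinearMap.sum_apply, ContinuousLinearMap.smulRight_apply, hP,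
      ContinuousLinearMap.proj_apply, Pi.single_apply, ite_smul, one_smul, zero_smul]
    rw [Finset.sum_ite_eq' S j (fun i => v i)]
  have himvx : imv v x = z.im • v 1 := by
    rw [imv, ← hS, Finset.sum_eq_single_of_mem 1 h1S]
    · rw [hx1]
    · intro i hiS hne
      rw [hxi i (Finset.mem_erase.mp hiS).1 hne, zero_smul]
  have h0S : (0 : Fin (m + 1)) ∉ S := by simp [hS]
  -- the three partial derivatives
  have hpd0 : pd 0 (sfun v F₁ F₂) x = d1 F₁ z + v 1 * d1 F₂ z := by
    rw [hpd 0, hLt]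
    simp only [ContinuousLinearMap.add_apply, ContinuousLinearMap.coe_comp', Function.comp_apply,
      ContinuousLinearMap.smul_apply, ContinuousLinearMap.smulRight_apply, hLzv0, hLnv,
      hLiv, h0S, if_neg, h01, if_false, hLgdef, himvx, hnx, hzx]
    simp only [if_neg h01, zero_smul, add_zero, mul_zero, neg_zero, smul_eq_mul,
      smul_mul_assoc, mul_smul_comm, smul_smul, zero_mul, zero_smul]
    rw [d1, d1]
    match_scalars <;> field_simp
  have hpd1 : pd 1 (sfun v F₁ F₂) x = dI F₁ z + v 1 * dI F₂ z := by
    rw [hpd 1, hLt]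
    simp only [ContinuousLinearMap.add_apply, ContinuousLinearMap.coe_comp', Function.comp_apply,
      ContinuousLinearMap.smul_apply, ContinuousLinearMap.smulRight_apply, hLzv1, hLnv,
      hLiv, h1S, if_pos, hLgdef, himvx, hnx, hzx, if_true]
    rw [dI, dI]
    simp only [smul_eq_mul, mul_add, smul_add, smul_mul_assoc, mul_smul_comm, smul_smul,
      mul_one, mul_neg, neg_smul, smul_neg]
    match_scalars <;> field_simp <;> ring
  have hpdi : ∀ i : Fin (m + 1), i ≠ 0 → i ≠ 1 →
      pd i (sfun v F₁ F₂) x = v i * (z.im⁻¹ • F₂ z) := by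
    intro i hi0 hi1
    have hiS : i ∈ S := Finset.mem_erase.mpr ⟨hi0, Finset.mem_univ _⟩
    rw [hpd i, hLt]
    simp only [ContinuousLinearMap.add_apply, ContinuousLinearMap.coe_comp', Function.comp_apply,
      ContinuousLinearMap.smul_apply, ContinuousLinearMap.smulRight_apply, hLzvi i hi0 hi1,
      hLnv, hLiv, hiS, if_pos, if_neg hi1, hLgdef, himvx, hnx, hzx, if_true]
    simp [smul_eq_mul, mul_smul_comm]
  -- assemble
  have hker' := hker x (by rwa [hzx]) (by rw [hnx]; exact hbne)
  rw [← Finset.add_sum_erase S _ h1S] at hker'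
  have hrest : ∑ i ∈ S.erase 1, v i * pd i (sfun v F₁ F₂) x
      = -((((m : ℝ) - 1)) • (z.im⁻¹ • F₂ z)) := by
    have hterm : ∀ i ∈ S.erase 1, v i * pd i (sfun v F₁ F₂) x = -(z.im⁻¹ • F₂ z) := by
      intro i hi
      obtain ⟨hi1, hiS⟩ := Finset.mem_erase.mp hi
      obtain ⟨hi0, -⟩ := Finset.mem_erase.mp hiS
      rw [hpdi i hi0 hi1, ← mul_assoc, hsq i hi0, neg_one_mul]
    rw [Finset.sum_congr rfl hterm, Finset.sum_const]
    have hcard : (S.erase 1).card = m - 1 := by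
      rw [Finset.card_erase_of_mem h1S, hS, Finset.card_erase_of_mem (Finset.mem_univ _),
        Finset.card_univ, Fintype.card_fin]
      omega
    rw [hcard, ← Nat.cast_smul_eq_nsmul ℝ, smul_neg]
    congr 2
    have : (1 : ℕ) ≤ m := by omega
    push_cast [this]
    ring
  rw [hpd0, hpd1, hrest, (hCR z hz).1, (hCR z hz).2] at hker'
  have hss : s * s = 1 := by rcases hs with rfl | rfl <;> norm_num
  have hsne : s ≠ 0 := by rcases hs with rfl | rfl <;> norm_num
  have h11 : v 1 * (v 1 * dI F₂ z) = -dI F₂ z := by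
    rw [← mul_assoc, hsq 1 h10, neg_one_mul]
  have hfin : (s * ((m : ℝ) - 1) * z.im⁻¹) • F₂ z = 0 := by
    rw [mul_add, h11, mul_neg, mul_smul_comm] at hker'
    linear_combination (norm := module) -hker' - hss • (v 1 * d1 F₂ z)
  rw [smul_eq_zero] at hfin
  rcases hfin with h | h
  · exfalso
    have hm1 : ((m : ℝ) - 1) ≠ 0 := by
      have : (2 : ℝ) ≤ (m : ℝ) := by exact_mod_cast hm
      linarith
    exact (mul_ne_zero (mul_ne_zero hsne hm1) (inv_ne_zero hbne)) h
  · exact h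


lemma F2zero (hm : 2 ≤ m) (v : Fin (m + 1) → A)
    (hsq : ∀ i : Fin (m + 1), i ≠ 0 → v i * v i = -1)
    (D : Set ℂ) (hD : IsOpen D) (hDsym : ∀ z ∈ D, (starRingEnd ℂ) z ∈ D)
    (F₁ F₂ : ℂ → A)
    (hs2 : ∀ z ∈ D, F₂ ((starRingEnd ℂ) z) = -F₂ z)
    (hF1 : ContDiffOn ℝ 1 F₁ D) (hF2 : ContDiffOn ℝ 1 F₂ D)
    (s : ℝ) (hs : s = 1 ∨ s = -1)
    (hCR : ∀ z ∈ D, d1 F₁ z = s • dI F₂ z ∧ dI F₁ z = -(s • d1 F₂ z))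
    (hker : ∀ x : Fin (m + 1) → ℝ, zeta x ∈ D → nIm x ≠ 0 →
      pd 0 (sfun v F₁ F₂) x
        + s • ∑ i ∈ Finset.univ.erase (0 : Fin (m + 1)), v i * pd i (sfun v F₁ F₂) x = 0) :
    ∀ z ∈ D, F₂ z = 0 := by
  intro z hz
  rcases lt_trichotomy z.im 0 with h | h | h
  · have hw : (starRingEnd ℂ) z ∈ D := hDsym z hz
    have him : 0 < ((starRingEnd ℂ) z).im := by simpa using neg_pos.mpr h
    have h0 : F₂ ((starRingEnd ℂ) z) = 0 :=
      key hm v hsq D hD F₁ F₂ hF1 hF2 s hs hCR hker _ hw him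
    have := hs2 z hz
    rw [h0] at this
    exact (neg_eq_zero.mp this.symm)
  · have hcz : (starRingEnd ℂ) z = z := Complex.conj_eq_iff_im.mpr h
    have h1 := hs2 z hz
    rw [hcz] at h1
    have h2 : (2 : ℝ) • F₂ z = 0 := by
      rw [two_smul]
      nth_rewrite 1 [h1]
      exact neg_add_cancel _
    rcases smul_eq_zero.mp h2 with h3 | h3
    · norm_num at h3
    · exact h3
  · exact key hm v hsq D hD F₁ F₂ hF1 hF2 s hs hCR hker z hz h

lemma fd1zero (D : Set ℂ) (hD : IsOpen D) (F₁ F₂ : ℂ → A)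
    (hF2zero : ∀ z ∈ D, F₂ z = 0) (s : ℝ)
    (hCR : ∀ z ∈ D, d1 F₁ z = s • dI F₂ z ∧ dI F₁ z = -(s • d1 F₂ z)) :
    ∀ z ∈ D, fderiv ℝ F₁ z = 0 := by
  intro z hz
  have h2 : fderiv ℝ F₂ z = 0 := by
    have hev : F₂ =ᶠ[nhds z] (fun _ => (0 : A)) :=
      Filter.eventuallyEq_of_mem (hD.mem_nhds hz) fun u hu => hF2zero u hu
    rw [hev.fderiv_eq]
    exact fderiv_const_apply 0
  have e1 : fderiv ℝ F₁ z 1 = 0 := by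
    have h := (hCR z hz).1
    rw [d1, dI, h2] at h
    simpa using h
  have eI : fderiv ℝ F₁ z Complex.I = 0 := by
    have h := (hCR z hz).2
    rw [dI, d1, h2] at h
    simpa using h
  refine ContinuousLinearMap.ext fun c => ?_
  have hc : c = c.re • (1 : ℂ) + c.im • Complex.I := by
    apply Complex.ext <;> simp [Complex.real_smul]
  rw [ContinuousLinearMap.zero_apply, hc, map_add, map_smul, map_smul, e1, eI, smul_zero,
    smul_zero, add_zero]

lemma conclusion_of (v : Fin (m + 1) → A) (D : Set ℂ) (hD : IsOpen D) (F₁ F₂ : ℂ → A)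
    (hF1 : ContDiffOn ℝ 1 F₁ D)
    (hF2zero : ∀ z ∈ D, F₂ z = 0)
    (hfd1 : ∀ z ∈ D, fderiv ℝ F₁ z = 0) :
    ∀ x : Fin (m + 1) → ℝ, zeta x ∈ D →
      ∃ U : Set (Fin (m + 1) → ℝ), IsOpen U ∧ x ∈ U ∧
        ∀ y ∈ U, zeta y ∈ D → sfun v F₁ F₂ y = sfun v F₁ F₂ x := by
  intro x hx
  obtain ⟨r, hr, hball⟩ := Metric.isOpen_iff.mp hD _ hx
  refine ⟨zeta ⁻¹' Metric.ball (zeta x) r, Metric.isOpen_ball.preimage continuous_zeta,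
    by simp [hr], ?_⟩
  intro y hy _
  have hyb : zeta y ∈ Metric.ball (zeta x) r := hy
  have hyD : zeta y ∈ D := hball hyb
  have hsf : ∀ w : Fin (m + 1) → ℝ, zeta w ∈ D → sfun v F₁ F₂ w = F₁ (zeta w) := by
    intro w hw
    simp [sfun, hF2zero _ hw]
  rw [hsf y hyD, hsf x hx]
  have hdiff : DifferentiableOn ℝ F₁ (Metric.ball (zeta x) r) :=
    (hF1.differentiableOn one_ne_zero).mono hball
  refine (convex_ball _ _).is_const_of_fderivWithin_eq_zero hdiff ?_ hyb (Metric.mem_ball_self hr)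
  intro w hw
  rw [fderivWithin_of_isOpen Metric.isOpen_ball hw]
  exact hfd1 _ (hball hw)

/-- **Slice-regular functions in the kernel of `∂̄_B` are locally constant.**
Let `f` be a slice function on an axially symmetric domain
`Ω = {x : ζ(x) ∈ D}` of a hypercomplex subspace `M` (associative case),
induced by the stem `(F₁, F₂)`.  If `f` is slice-regular and `∂̄_B f = 0`, then
`f` is locally constant on `Ω`.  Similarly, if `f` is anti-slice-regular
(`∂f/∂x = 0`) and `∂_B f = 0`, then `f` is locally constant on `Ω`. -/
theorem kernel_dbar_locally_constant
    (hm : 2 ≤ m)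
    (v : Fin (m + 1) → A) (hv0 : v 0 = 1)
    (hsq : ∀ i : Fin (m + 1), i ≠ 0 → v i * v i = -1)
    (hanti : ∀ i j : Fin (m + 1), i ≠ 0 → j ≠ 0 → i ≠ j → v i * v j = -(v j * v i))
    (D : Set ℂ) (hD : IsOpen D) (hDsym : ∀ z ∈ D, (starRingEnd ℂ) z ∈ D)
    (hconn : IsPreconnected {x : Fin (m + 1) → ℝ | zeta x ∈ D})
    (F₁ F₂ : ℂ → A)
    (hs1 : ∀ z ∈ D, F₁ ((starRingEnd ℂ) z) = F₁ z)
    (hs2 : ∀ z ∈ D, F₂ ((starRingEnd ℂ) z) = -F₂ z)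
    (hF1 : ContDiffOn ℝ 1 F₁ D) (hF2 : ContDiffOn ℝ 1 F₂ D) :
    ((∀ z ∈ D, d1 F₁ z = dI F₂ z ∧ dI F₁ z = -(d1 F₂ z)) →
      (∀ x : Fin (m + 1) → ℝ, zeta x ∈ D → nIm x ≠ 0 →
        dbar v (sfun v F₁ F₂) x = 0) →
      ∀ x : Fin (m + 1) → ℝ, zeta x ∈ D →
        ∃ U : Set (Fin (m + 1) → ℝ), IsOpen U ∧ x ∈ U ∧
          ∀ y ∈ U, zeta y ∈ D → sfun v F₁ F₂ y = sfun v F₁ F₂ x) ∧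
    ((∀ z ∈ D, d1 F₁ z = -(dI F₂ z) ∧ dI F₁ z = d1 F₂ z) →
      (∀ x : Fin (m + 1) → ℝ, zeta x ∈ D → nIm x ≠ 0 →
        dconj v (sfun v F₁ F₂) x = 0) →
      ∀ x : Fin (m + 1) → ℝ, zeta x ∈ D →
        ∃ U : Set (Fin (m + 1) → ℝ), IsOpen U ∧ x ∈ U ∧
          ∀ y ∈ U, zeta y ∈ D → sfun v F₁ F₂ y = sfun v F₁ F₂ x) := by
  constructor
  · intro hCR hker
    have hCR' : ∀ z ∈ D, d1 F₁ z = (1 : ℝ) • dI F₂ z ∧ dI F₁ z = -((1 : ℝ) • d1 F₂ z) := by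
      intro z hz; simpa using hCR z hz
    have hker' : ∀ x : Fin (m + 1) → ℝ, zeta x ∈ D → nIm x ≠ 0 →
        pd 0 (sfun v F₁ F₂) x
          + (1 : ℝ) • ∑ i ∈ Finset.univ.erase (0 : Fin (m + 1)),
              v i * pd i (sfun v F₁ F₂) x = 0 := by
      intro x hx hn
      have h := hker x hx hn
      rw [dbar] at h
      rcases smul_eq_zero.mp h with h2 | h2
      · norm_num at h2
      · simpa using h2
    have hz2 : ∀ z ∈ D, F₂ z = 0 :=
      F2zero hm v hsq D hD hDsym F₁ F₂ hs2 hF1 hF2 1 (Or.inl rfl) hCR' hker'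
    exact conclusion_of v D hD F₁ F₂ hF1 hz2 (fd1zero D hD F₁ F₂ hz2 1 hCR')
  · intro hCR hker
    have hCR' : ∀ z ∈ D, d1 F₁ z = (-1 : ℝ) • dI F₂ z ∧ dI F₁ z = -((-1 : ℝ) • d1 F₂ z) := by
      intro z hz
      obtain ⟨h1, h2⟩ := hCR z hz
      constructor
      · rw [h1]; simp
      · rw [h2]; simp
    have hker' : ∀ x : Fin (m + 1) → ℝ, zeta x ∈ D → nIm x ≠ 0 →
        pd 0 (sfun v F₁ F₂) x
          + (-1 : ℝ) • ∑ i ∈ Finset.univ.erase (0 : Fin (m + 1)),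
              v i * pd i (sfun v F₁ F₂) x = 0 := by
      intro x hx hn
      have h := hker x hx hn
      rw [dconj] at h
      rcases smul_eq_zero.mp h with h2 | h2
      · norm_num at h2
      · rw [neg_one_smul, ← sub_eq_add_neg]
        exact h2
    have hz2 : ∀ z ∈ D, F₂ z = 0 :=
      F2zero hm v hsq D hD hDsym F₁ F₂ hs2 hF1 hF2 (-1) (Or.inr rfl) hCR' hker'
    exact conclusion_of v D hD F₁ F₂ hF1 hz2 (fd1zero D hD F₁ F₂ hz2 (-1) hCR')


end PaperStmt
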